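/- For every fixed integer m ≥ 1, the limit of π_m(n) as n → ∞ exists and equals (−1)^{m+1}/2. -/

import Mathlib

open Finset Filter Nat

/-- `π_m(n) = ∏_{k=1, k ≠ m}^{n} (1 - m²/k²)`. -/
noncomputable def pim (n m : ℕ) : ℝ :=
  ∏ k ∈ (Finset.Icc 1 n).erase m, (1 - (m : ℝ) ^ 2 / (k : ℝ) ^ 2)

lemma aux_L1 (m : ℕ) : ∀ n : ℕ, m ! * ∏ k ∈ Finset.Icc 1 n, (k + m) = (n + m)! := by
  intro n
  induction n with
  | zero => simp
  | succ n ih =>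
      rw [Finset.prod_Icc_succ_top (by omega)]
      have : n + 1 + m = (n + m) + 1 := by omega
      rw [this, Nat.factorial_succ, ← ih]
      ring

lemma aux_L2 (m : ℕ) : ∀ n : ℕ, m ≤ n → ∏ k ∈ Finset.Icc (m+1) n, (k - m) = (n - m)! := by
  intro n
  induction n with
  | zero => intro h; interval_cases m; simp
  | succ n ih =>
      intro h
      rcases Nat.eq_or_lt_of_le h with h' | h'
      · rw [← h']; simp
      · have hmn : m ≤ n := by omega
        rw [Finset.prod_Icc_succ_top (by omega), ih hmn]
        have : n + 1 - m = (n - m) + 1 := by omega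
        rw [this, Nat.factorial_succ]
        ring

lemma aux_L3 (m : ℕ) : ∏ k ∈ Finset.Icc 1 (m-1), (m - k) = (m-1)! := by
  rw [← Finset.prod_Ico_id_eq_factorial (m-1)]
  apply Finset.prod_nbij' (fun k => m - k) (fun k => m - k) <;>
    (intro a ha; simp only [Finset.mem_Icc, Finset.mem_Ico] at *) <;> omega

lemma aux_L4 (a : ℕ) : ∀ b : ℕ, (a + b)! = a ! * ∏ i ∈ Finset.range b, (a + 1 + i) := by
  intro b
  induction b with
  | zero => simp
  | succ b ih =>
      rw [Finset.prod_range_succ, ← mul_assoc, ← ih]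
      have : a + (b + 1) = (a + b) + 1 := by omega
      rw [this, Nat.factorial_succ]
      ring

lemma aux_split (m n : ℕ) (hm : 1 ≤ m) (hmn : m ≤ n) :
    (Finset.Icc 1 n).erase m = Finset.Icc 1 (m-1) ∪ Finset.Icc (m+1) n := by
  ext k
  simp only [Finset.mem_erase, Finset.mem_Icc, Finset.mem_union]
  omega

lemma pim_eq (m n : ℕ) (hm : 1 ≤ m) (hmn : m ≤ n) :
    pim n m = (-1 : ℝ)^(m+1)/2 * (((n-m)! : ℝ) * ((n+m)! : ℝ) / ((n ! : ℝ))^2) := by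
  have hmem : m ∈ Finset.Icc 1 n := by simp [Finset.mem_Icc]; omega
  set S := (Finset.Icc 1 n).erase m with hSdef
  -- each factor
  have hS : ∀ k ∈ S, (1 - (m : ℝ) ^ 2 / (k : ℝ) ^ 2)
      = (((k:ℝ) - m) * ((k:ℝ) + m)) / ((k:ℝ) * (k:ℝ)) := by
    intro k hk
    simp only [hSdef, Finset.mem_erase, Finset.mem_Icc] at hk
    have hk0 : (k : ℝ) ≠ 0 := by
      exact_mod_cast Nat.one_le_iff_ne_zero.mp hk.2.1
    field_simp
    ring
  have hprod : pim n m = (∏ k ∈ S, ((k:ℝ) - m)) * (∏ k ∈ S, ((k:ℝ) + m))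
      / ((∏ k ∈ S, (k:ℝ)) * (∏ k ∈ S, (k:ℝ))) := by
    rw [pim, Finset.prod_congr rfl hS, Finset.prod_div_distrib, Finset.prod_mul_distrib,
      Finset.prod_mul_distrib]
  -- the C product
  have hCnat : m * ∏ k ∈ S, k = n ! := by
    rw [hSdef, Finset.mul_prod_erase _ (fun k => k) hmem, ← Finset.Ico_add_one_right_eq_Icc]
    exact Finset.prod_Ico_id_eq_factorial n
  have hC : (m : ℝ) * ∏ k ∈ S, (k:ℝ) = (n ! : ℝ) := by
    have h := congrArg (Nat.cast : ℕ → ℝ) hCnat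
    push_cast at h
    exact h
  -- the B product
  have hBnat : (m ! : ℕ) * ((m + m) * ∏ k ∈ S, (k + m)) = (n + m)! := by
    rw [hSdef, Finset.mul_prod_erase _ (fun k => k + m) hmem]
    exact aux_L1 m n
  have hB : (m ! : ℝ) * (((m:ℝ) + m) * ∏ k ∈ S, ((k:ℝ) + m)) = ((n + m)! : ℝ) := by
    have h := congrArg (Nat.cast : ℕ → ℝ) hBnat
    push_cast at h
    exact h
  -- the A product
  have hdisj : Disjoint (Finset.Icc 1 (m-1)) (Finset.Icc (m+1) n) := by
    rw [Finset.disjoint_left]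
    intro a ha hb
    simp only [Finset.mem_Icc] at ha hb
    omega
  have hA : (∏ k ∈ S, ((k:ℝ) - m))
      = (-1 : ℝ)^(m-1) * ((m-1)! : ℝ) * ((n-m)! : ℝ) := by
    rw [hSdef, aux_split m n (by omega) hmn, Finset.prod_union hdisj]
    have h1 : ∏ k ∈ Finset.Icc 1 (m-1), ((k:ℝ) - m)
        = (-1 : ℝ)^(m-1) * ((m-1)! : ℝ) := by
      have : ∀ k ∈ Finset.Icc 1 (m-1), ((k:ℝ) - m) = (-1) * ((m - k : ℕ) : ℝ) := by
        intro k hk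
        simp only [Finset.mem_Icc] at hk
        have hkm : k ≤ m := by omega
        push_cast [Nat.cast_sub hkm]
        try ring
      rw [Finset.prod_congr rfl this, Finset.prod_mul_distrib, Finset.prod_const,
        Nat.card_Icc, ← Nat.cast_prod, aux_L3 m]
      norm_num
    have h2 : ∏ k ∈ Finset.Icc (m+1) n, ((k:ℝ) - m) = ((n-m)! : ℝ) := by
      have : ∀ k ∈ Finset.Icc (m+1) n, ((k:ℝ) - m) = ((k - m : ℕ) : ℝ) := by
        intro k hk
        simp only [Finset.mem_Icc] at hk
        push_cast [Nat.cast_sub (by omega : m ≤ k)]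
        try ring
      rw [Finset.prod_congr rfl this, ← Nat.cast_prod, aux_L2 m n hmn]
    rw [h1, h2]
    try ring
  -- put it together
  have hcpos : (0:ℝ) < ∏ k ∈ S, (k:ℝ) := by
    apply Finset.prod_pos
    intro k hk
    simp only [hSdef, Finset.mem_erase, Finset.mem_Icc] at hk
    have : 1 ≤ k := hk.2.1
    exact_mod_cast this
  have hcne : (∏ k ∈ S, (k:ℝ)) ≠ 0 := ne_of_gt hcpos
  have hmfac : ((m ! : ℕ) : ℝ) = (m : ℝ) * ((m - 1)! : ℝ) := by
    have h := congrArg (Nat.cast : ℕ → ℝ) (Nat.mul_factorial_pred (by omega : m ≠ 0))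
    push_cast at h
    exact h.symm
  rw [hprod, hA, ← hC, ← hB, hmfac]
  have hmne : (m : ℝ) ≠ 0 := by positivity
  have hsign : ((-1 : ℝ))^(m+1) = ((-1 : ℝ))^(m-1) := by
    have h : m + 1 = (m - 1) + 2 := by omega
    rw [h, pow_add]
    norm_num
  rw [hsign]
  field_simp
  ring

/-- for every fixed integer `m ≥ 1`,
`π_m(n) → (-1)^(m+1) / 2` as `n → ∞`. -/
theorem pim_tendsto (m : ℕ) (hm : 1 ≤ m) :
    Filter.Tendsto (fun n : ℕ => pim n m) Filter.atTop
      (nhds ((-1 : ℝ) ^ (m + 1) / 2)) := by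
  -- the ratio product tends to 1
  have hh : Tendsto (fun n : ℕ => ∏ i ∈ Finset.range m,
      (((n:ℝ)+1+i)/((n:ℝ)-m+1+i))) atTop (nhds 1) := by
    have := tendsto_finset_prod (f := fun (i : ℕ) (n : ℕ) => ((n:ℝ)+1+i)/((n:ℝ)-m+1+i))
      (x := atTop) (a := fun _ => (1:ℝ)) (Finset.range m) ?_
    · simpa using this
    · intro i _
      have hd : Tendsto (fun n : ℕ => (n:ℝ)-m+1+i) atTop atTop := by
        simp only [sub_eq_add_neg]
        exact tendsto_atTop_add_const_right _ _
          (tendsto_atTop_add_const_right _ _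
            (tendsto_atTop_add_const_right _ _ tendsto_natCast_atTop_atTop))
      have h0 : Tendsto (fun n : ℕ => (m:ℝ)/((n:ℝ)-m+1+i)) atTop (nhds 0) :=
        tendsto_const_nhds.div_atTop hd
      have h1 : Tendsto (fun n : ℕ => 1 + (m:ℝ)/((n:ℝ)-m+1+i)) atTop (nhds 1) := by
        simpa using tendsto_const_nhds.add h0
      apply h1.congr'
      filter_upwards [eventually_ge_atTop m] with n hn
      have hmn : (m:ℝ) ≤ n := by exact_mod_cast hn
      have hdne : (n:ℝ)-m+1+i ≠ 0 := by
        have h0i : (0:ℝ) ≤ (i:ℝ) := Nat.cast_nonneg i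
        intro h; nlinarith
      field_simp
      ring
  -- closed form as a ratio product
  have key : ∀ n, m ≤ n → pim n m = (-1 : ℝ)^(m+1)/2 *
      ∏ i ∈ Finset.range m, (((n:ℝ)+1+i)/((n:ℝ)-m+1+i)) := by
    intro n hn
    rw [pim_eq m n hm hn]
    congr 1
    have hmn : (m:ℝ) ≤ n := by exact_mod_cast hn
    have e1 : ((n+m)! : ℝ) = (n ! : ℝ) * ∏ i ∈ Finset.range m, ((n:ℝ)+1+i) := by
      have h := congrArg (Nat.cast : ℕ → ℝ) (aux_L4 n m)
      push_cast at h
      exact h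
    have e2 : (n ! : ℝ) = ((n-m)! : ℝ) * ∏ i ∈ Finset.range m, ((n:ℝ)-m+1+i) := by
      have h := congrArg (Nat.cast : ℕ → ℝ) (aux_L4 (n-m) m)
      rw [Nat.sub_add_cancel hn] at h
      push_cast [Nat.cast_sub hn] at h
      exact h
    have hQpos : (0:ℝ) < ∏ i ∈ Finset.range m, ((n:ℝ)-m+1+i) := by
      apply Finset.prod_pos
      intro i _
      have : (0:ℝ) ≤ i := by positivity
      linarith
    have hfacne : ((n-m)! : ℝ) ≠ 0 := by
      exact_mod_cast (Nat.factorial_pos (n-m)).ne'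
    rw [Finset.prod_div_distrib, e1, e2]
    field_simp
  have : Tendsto (fun n : ℕ => (-1 : ℝ)^(m+1)/2 *
      ∏ i ∈ Finset.range m, (((n:ℝ)+1+i)/((n:ℝ)-m+1+i))) atTop
      (nhds ((-1 : ℝ)^(m+1)/2)) := by
    simpa using tendsto_const_nhds.mul hh
  apply this.congr'
  filter_upwards [eventually_ge_atTop m] with n hn
  exact (key n hn).symm
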